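/- Let I ⊆ ℝ be an interval and φ : I → ℝ twice differentiable with φ(r) > 0 and φ(r)² + φ'(r)² + 2φ(r)φ''(r) = 1 for all r ∈ I. Then u := φ^{3/2} is twice differentiable on I and satisfies u''(r) = (3/4)(u(r)^{−1/3} − u(r)) for all r ∈ I. -/
import Mathlib


/-- If `φ > 0` is twice differentiable on an interval `I` and satisfies
`φ² + (φ')² + 2φφ'' = 1`, then `u = φ^{3/2}` is twice differentiable on `I` and
satisfies `u'' = (3/4)(u^{-1/3} - u)`. -/
theorem stmt_4 (I : Set ℝ) (hI : I.OrdConnected)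
    (φ φ' φ'' : ℝ → ℝ)
    (hφ1 : ∀ r ∈ I, HasDerivAt φ (φ' r) r)
    (hφ2 : ∀ r ∈ I, HasDerivAt φ' (φ'' r) r)
    (hpos : ∀ r ∈ I, 0 < φ r)
    (hode : ∀ r ∈ I, (φ r) ^ 2 + (φ' r) ^ 2 + 2 * (φ r * φ'' r) = 1)
    (u : ℝ → ℝ) (hu : u = fun r => φ r ^ ((3 : ℝ) / 2)) :
    ∃ u' u'' : ℝ → ℝ, ∀ r ∈ I,
      HasDerivAt u (u' r) r ∧ HasDerivAt u' (u'' r) r ∧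
      u'' r = (3 / 4) * ((u r) ^ (-(1 : ℝ) / 3) - u r) := by
  refine ⟨fun r => φ' r * (3 / 2) * φ r ^ ((1 : ℝ) / 2),
    fun r => (φ'' r * (3 / 2) * φ r ^ ((1 : ℝ) / 2)) +
      (φ' r * (3 / 2) * (φ' r * ((1 : ℝ) / 2) * φ r ^ (-(1 : ℝ) / 2))), fun r hr => ?_⟩
  have hφr := hpos r hr
  have hne : φ r ≠ 0 := ne_of_gt hφr
  have h1 : HasDerivAt u (φ' r * (3 / 2) * φ r ^ ((3 : ℝ) / 2 - 1)) r := by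
    rw [hu]; exact (hφ1 r hr).rpow_const (Or.inl hne)
  have e1 : (3 : ℝ) / 2 - 1 = 1 / 2 := by norm_num
  rw [e1] at h1
  -- second derivative
  have hsq : HasDerivAt (fun y => φ y ^ ((1 : ℝ) / 2))
      (φ' r * ((1 : ℝ) / 2) * φ r ^ ((1 : ℝ) / 2 - 1)) r :=
    (hφ1 r hr).rpow_const (Or.inl hne)
  have e2 : (1 : ℝ) / 2 - 1 = -(1) / 2 := by norm_num
  rw [e2] at hsq
  have h2 : HasDerivAt (fun y => φ' y * (3 / 2) * φ y ^ ((1 : ℝ) / 2))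
      ((φ'' r * (3 / 2) * φ r ^ ((1 : ℝ) / 2)) +
        (φ' r * (3 / 2) * (φ' r * ((1 : ℝ) / 2) * φ r ^ (-(1 : ℝ) / 2)))) r :=
    (((hφ2 r hr).mul_const (3 / 2)).mul hsq)
  refine ⟨h1, h2, ?_⟩
  -- algebra
  have hur : u r = φ r ^ ((3 : ℝ) / 2) := by rw [hu]
  have hinv : (φ r ^ ((3 : ℝ) / 2)) ^ (-(1 : ℝ) / 3) = φ r ^ (-(1 : ℝ) / 2) := by
    rw [← Real.rpow_mul hφr.le]; norm_num
  have hhalf : φ r ^ ((1 : ℝ) / 2) = φ r ^ (-(1 : ℝ) / 2) * φ r := by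
    have := Real.rpow_add hφr (-(1 : ℝ) / 2) 1
    rw [Real.rpow_one] at this
    rw [← this]; norm_num
  have h32 : φ r ^ ((3 : ℝ) / 2) = φ r ^ (-(1 : ℝ) / 2) * φ r ^ 2 := by
    have := Real.rpow_add hφr (-(1 : ℝ) / 2) 2
    rw [Real.rpow_two] at this
    rw [← this]; norm_num
  have hode' := hode r hr
  show φ'' r * (3 / 2) * φ r ^ ((1 : ℝ) / 2) +
      φ' r * (3 / 2) * (φ' r * ((1 : ℝ) / 2) * φ r ^ (-(1 : ℝ) / 2)) =
      3 / 4 * (u r ^ (-(1 : ℝ) / 3) - u r)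
  rw [hur, hinv, h32, hhalf]
  linear_combination (3 / 4) * φ r ^ (-(1 : ℝ) / 2) * hode'
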